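/- (Entanglement Lemma) Let r ≥ 1 and let S ⊆ Fin r with |S| ≥ 2. Let ψ be any r-qubit state vector and let φ = CZ_S ψ. Then at least one of the following holds: (1) ψ is S-entangled; (2) φ is S-entangled; (3) CZ_S simplifies on ψ. -/
import Mathlib


open scoped BigOperators

/-- The state space of `r` qubits: amplitudes indexed by bit strings of length `r`. -/
abbrev QState (r : ℕ) := (Fin r → Bool) → ℂ

/-- A unit vector (state vector): Euclidean norm 1. -/
def UnitVec {r : ℕ} (ψ : QState r) : Prop := ∑ x, ‖ψ x‖ ^ 2 = 1

/-- The C-SIGN gate on the qubits in `S`: flips the sign of the amplitude exactly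
when all bits in `S` are `1`. -/
noncomputable def czGate {r : ℕ} (S : Finset (Fin r)) (ψ : QState r) : QState r :=
  fun x => if ∀ i ∈ S, x i = true then -ψ x else ψ x

/-- `{A, B}` is a bipartition of the qubits. -/
def Bipartition {r : ℕ} (A B : Finset (Fin r)) : Prop :=
  A.Nonempty ∧ B.Nonempty ∧ Disjoint A B ∧ A ∪ B = Finset.univ

/-- `ψ` separates at `{A, B}`: it is a tensor product of a state on the qubits in `A`
and a state on the qubits in `B`. -/
def SeparatesAt {r : ℕ} (ψ : QState r) (A B : Finset (Fin r)) : Prop :=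
  ∃ (ψA : ({i : Fin r // i ∈ A} → Bool) → ℂ) (ψB : ({i : Fin r // i ∈ B} → Bool) → ℂ),
    ∀ x : Fin r → Bool, ψ x = ψA (fun i => x i.1) * ψB (fun i => x i.1)

/-- `ψ` is `S`-separable: it separates at some bipartition both of whose parts
meet `S`. -/
def SSeparable {r : ℕ} (S : Finset (Fin r)) (ψ : QState r) : Prop :=
  ∃ A B : Finset (Fin r),
    Bipartition A B ∧ (A ∩ S).Nonempty ∧ (B ∩ S).Nonempty ∧ SeparatesAt ψ A B

/-- `ψ` is `S`-entangled: not `S`-separable. -/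
def SEntangled {r : ℕ} (S : Finset (Fin r)) (ψ : QState r) : Prop :=
  ¬ SSeparable S ψ

/-- `CZ_S` simplifies on `ψ`: it either disappears on `ψ` or simplifies to `CZ_T`
on `ψ` for some proper subset `T ⊊ S`. -/
noncomputable def SimplifiesOn {r : ℕ} (S : Finset (Fin r)) (ψ : QState r) : Prop :=
  czGate S ψ = ψ ∨ ∃ T : Finset (Fin r), T ⊂ S ∧ czGate S ψ = czGate T ψ ∧ czGate S ψ ≠ ψ

section EntAux
variable {r : ℕ}

lemma cz_pos (S : Finset (Fin r)) (ψ : QState r) (x : Fin r → Bool)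
    (h : ∀ i ∈ S, x i = true) : czGate S ψ x = -ψ x := if_pos h

lemma cz_neg (S : Finset (Fin r)) (ψ : QState r) (x : Fin r → Bool)
    (h : ¬ ∀ i ∈ S, x i = true) : czGate S ψ x = ψ x := if_neg h

lemma cz_ne_zero {S : Finset (Fin r)} {ψ : QState r} {x : Fin r → Bool}
    (h : ψ x ≠ 0) : czGate S ψ x ≠ 0 := by
  unfold czGate; split
  · simpa using h
  · exact h

lemma ne_zero_of_cz {S : Finset (Fin r)} {ψ : QState r} {x : Fin r → Bool}
    (h : czGate S ψ x ≠ 0) : ψ x ≠ 0 := by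
  intro h0; apply h; unfold czGate; split <;> simp [h0]

lemma restr_congr {C : Finset (Fin r)} {x y : Fin r → Bool}
    (h : ∀ i ∈ C, x i = y i) :
    (fun i : {i : Fin r // i ∈ C} => x i.1) = (fun i : {i : Fin r // i ∈ C} => y i.1) :=
  funext fun i => h i.1 i.2

lemma sep_swap {ψ : QState r} {A B : Finset (Fin r)} (h : SeparatesAt ψ A B) :
    SeparatesAt ψ B A := by
  obtain ⟨f, g, hfg⟩ := h
  exact ⟨g, f, fun x => by rw [hfg x]; ring⟩

lemma witness_top {S : Finset (Fin r)} {ψ : QState r} (h : czGate S ψ ≠ ψ) :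
    ∃ x, ψ x ≠ 0 ∧ ∀ i ∈ S, x i = true := by
  by_contra hc
  push_neg at hc
  apply h; funext x
  by_cases hx : ∀ i ∈ S, x i = true
  · have h0 : ψ x = 0 := by
      by_contra h0
      obtain ⟨i, hi, hxi⟩ := hc x h0
      exact hxi (hx i hi)
    rw [cz_pos S ψ x hx, h0, neg_zero]
  · exact cz_neg S ψ x hx

lemma witness_sub {S T : Finset (Fin r)} {ψ : QState r} (hTS : T ⊆ S)
    (h : czGate S ψ ≠ czGate T ψ) :
    ∃ x, ψ x ≠ 0 ∧ (∀ i ∈ T, x i = true) ∧ ∃ i ∈ S, x i = false := by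
  by_contra hc
  push_neg at hc
  apply h; funext x
  unfold czGate
  by_cases hS : ∀ i ∈ S, x i = true
  · rw [if_pos hS, if_pos (fun i hi => hS i (hTS hi))]
  · rw [if_neg hS]
    by_cases hT : ∀ i ∈ T, x i = true
    · have h0 : ψ x = 0 := by
        by_contra h0
        push_neg at hS
        obtain ⟨i, hi, hxi⟩ := hS
        exact (hc x h0 hT i hi) (Bool.not_eq_true _ ▸ hxi)
      rw [if_pos hT, h0, neg_zero]
    · rw [if_neg hT]

/-- Core contradiction: if `ψ` separates at `{A,B}` and `czGate S ψ` separates at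
`{A',B'}`, and there are support points `w0` (all ones on `S`), `wa` (a zero in
`S ∩ A ∩ A'`) and `wb` (a zero in `S ∩ B ∩ B'`), we get a contradiction. -/
lemma cz_core (S : Finset (Fin r)) (ψ : QState r)
    (A B A' B' : Finset (Fin r))
    (hAB : Disjoint A B) (hABu : A ∪ B = Finset.univ)
    (hA'B' : Disjoint A' B')
    (hsep : SeparatesAt ψ A B) (hsep' : SeparatesAt (czGate S ψ) A' B')
    (w0 wa wb : Fin r → Bool)
    (h0 : ψ w0 ≠ 0) (h0S : ∀ i ∈ S, w0 i = true)
    (ha : ψ wa ≠ 0)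
    (haf : ∃ i, i ∈ S ∧ (i ∈ A ∧ i ∈ A') ∧ wa i = false)
    (hb : ψ wb ≠ 0)
    (hbf : ∃ i, i ∈ S ∧ (i ∈ B ∧ i ∈ B') ∧ wb i = false) : False := by
  classical
  obtain ⟨f, g, hfg⟩ := hsep
  obtain ⟨F, G, hFG⟩ := hsep'
  have hAnB : ∀ i : Fin r, i ∈ A → i ∉ B := fun i hi => Finset.disjoint_left.mp hAB hi
  have hBnA : ∀ i : Fin r, i ∈ B → i ∉ A := fun i hi => Finset.disjoint_right.mp hAB hi
  have hA'nB' : ∀ i : Fin r, i ∈ A' → i ∉ B' := fun i hi => Finset.disjoint_left.mp hA'B' hi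
  have hB'nA' : ∀ i : Fin r, i ∈ B' → i ∉ A' := fun i hi => Finset.disjoint_right.mp hA'B' hi
  set Y : Fin r → Bool :=
    fun i => if i ∈ A ∧ i ∈ A' then wa i else if i ∈ B ∧ i ∈ B' then wb i else w0 i with hYd
  set U : Fin r → Bool := fun i => if i ∈ B ∧ i ∈ B' then wb i else w0 i with hUd
  set V : Fin r → Bool := fun i => if i ∈ A ∧ i ∈ A' then wa i else w0 i with hVd
  set Ma : Fin r → Bool := fun i => if i ∈ A then wa i else w0 i with hMad
  set Mb : Fin r → Bool := fun i => if i ∈ A then w0 i else wb i with hMbd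
  -- restriction facts
  have rYA : ∀ i ∈ A, Y i = V i := by
    intro i hi; have hB := hAnB i hi; simp only [hYd, hVd]
    by_cases h' : i ∈ A' <;> simp [hi, h', hB]
  have rYB : ∀ i ∈ B, Y i = U i := by
    intro i hi; have hA := hBnA i hi; simp only [hYd, hUd]; simp [hA]
  have rUA : ∀ i ∈ A, U i = w0 i := by
    intro i hi; have hB := hAnB i hi; simp only [hUd]; simp [hB]
  have rVB : ∀ i ∈ B, V i = w0 i := by
    intro i hi; have hA := hBnA i hi; simp only [hVd]; simp [hA]
  have rUA' : ∀ i ∈ A', U i = w0 i := by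
    intro i hi; have hB' := hA'nB' i hi; simp only [hUd]; simp [hB']
  have rUB' : ∀ i ∈ B', U i = Y i := by
    intro i hi; have hA' := hB'nA' i hi; simp only [hUd, hYd]; simp [hA']
  have rVA' : ∀ i ∈ A', V i = Y i := by
    intro i hi; have hB' := hA'nB' i hi; simp only [hVd, hYd]; simp [hB']
  have rVB' : ∀ i ∈ B', V i = w0 i := by
    intro i hi; have hA' := hB'nA' i hi; simp only [hVd]; simp [hA']
  have rVA'2 : ∀ i ∈ A', V i = Ma i := by
    intro i hi; simp only [hVd, hMad]; by_cases h' : i ∈ A <;> simp [hi, h']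
  have rUB'2 : ∀ i ∈ B', U i = Mb i := by
    intro i hi; simp only [hUd, hMbd]
    by_cases h' : i ∈ A
    · have hB := hAnB i h'; simp [h', hB]
    · have hB : i ∈ B := by
        have : i ∈ A ∪ B := by rw [hABu]; exact Finset.mem_univ i
        exact (Finset.mem_union.mp this).resolve_left h'
      simp [h', hB, hi]
  have rMaA : ∀ i ∈ A, Ma i = wa i := by intro i hi; simp only [hMad]; simp [hi]
  have rMaB : ∀ i ∈ B, Ma i = w0 i := by
    intro i hi; have hA := hBnA i hi; simp only [hMad]; simp [hA]
  have rMbA : ∀ i ∈ A, Mb i = w0 i := by intro i hi; simp only [hMbd]; simp [hi]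
  have rMbB : ∀ i ∈ B, Mb i = wb i := by
    intro i hi; have hA := hBnA i hi; simp only [hMbd]; simp [hA]
  -- component nonvanishing
  have h0' := h0; rw [hfg w0] at h0'
  have hf0 : f (fun i : {i : Fin r // i ∈ A} => w0 i.1) ≠ 0 := left_ne_zero_of_mul h0'
  have hg0 : g (fun i : {i : Fin r // i ∈ B} => w0 i.1) ≠ 0 := right_ne_zero_of_mul h0'
  have ha' := ha; rw [hfg wa] at ha'
  have hfa : f (fun i : {i : Fin r // i ∈ A} => wa i.1) ≠ 0 := left_ne_zero_of_mul ha'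
  have hb' := hb; rw [hfg wb] at hb'
  have hgb : g (fun i : {i : Fin r // i ∈ B} => wb i.1) ≠ 0 := right_ne_zero_of_mul hb'
  have hMa0 : ψ Ma ≠ 0 := by
    rw [hfg Ma, restr_congr rMaA, restr_congr rMaB]; exact mul_ne_zero hfa hg0
  have hMb0 : ψ Mb ≠ 0 := by
    rw [hfg Mb, restr_congr rMbA, restr_congr rMbB]; exact mul_ne_zero hf0 hgb
  -- φ components
  have hφ0 := cz_ne_zero (S := S) h0; rw [hFG w0] at hφ0
  have hF0 : F (fun i : {i : Fin r // i ∈ A'} => w0 i.1) ≠ 0 := left_ne_zero_of_mul hφ0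
  have hG0 : G (fun i : {i : Fin r // i ∈ B'} => w0 i.1) ≠ 0 := right_ne_zero_of_mul hφ0
  have hφa := cz_ne_zero (S := S) hMa0; rw [hFG Ma] at hφa
  have hFa : F (fun i : {i : Fin r // i ∈ A'} => Ma i.1) ≠ 0 := left_ne_zero_of_mul hφa
  have hφb := cz_ne_zero (S := S) hMb0; rw [hFG Mb] at hφb
  have hGb : G (fun i : {i : Fin r // i ∈ B'} => Mb i.1) ≠ 0 := right_ne_zero_of_mul hφb
  -- ψ V, ψ U, ψ Y nonzero
  have hV0 : ψ V ≠ 0 := by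
    apply ne_zero_of_cz (S := S)
    rw [hFG V, restr_congr rVA'2, restr_congr rVB']
    exact mul_ne_zero hFa hG0
  have hU0 : ψ U ≠ 0 := by
    apply ne_zero_of_cz (S := S)
    rw [hFG U, restr_congr rUA', restr_congr rUB'2]
    exact mul_ne_zero hF0 hGb
  have hV0' := hV0; rw [hfg V] at hV0'
  have hU0' := hU0; rw [hfg U] at hU0'
  have hfV : f (fun i : {i : Fin r // i ∈ A} => V i.1) ≠ 0 := left_ne_zero_of_mul hV0'
  have hgU : g (fun i : {i : Fin r // i ∈ B} => U i.1) ≠ 0 := right_ne_zero_of_mul hU0'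
  have hY0 : ψ Y ≠ 0 := by
    rw [hfg Y, restr_congr rYA, restr_congr rYB]; exact mul_ne_zero hfV hgU
  -- sign facts
  obtain ⟨ia, hiaS, ⟨hiaA, hiaA'⟩, hiaf⟩ := haf
  obtain ⟨ib, hibS, ⟨hibB, hibB'⟩, hibf⟩ := hbf
  have sY : czGate S ψ Y = ψ Y := by
    apply cz_neg; intro hall
    have := hall ia hiaS
    rw [hYd] at this; simp [hiaA, hiaA', hiaf] at this
  have sU : czGate S ψ U = ψ U := by
    apply cz_neg; intro hall
    have := hall ib hibS
    rw [hUd] at this; simp [hibB, hibB', hibf] at this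
  have sV : czGate S ψ V = ψ V := by
    apply cz_neg; intro hall
    have := hall ia hiaS
    rw [hVd] at this; simp [hiaA, hiaA', hiaf] at this
  have s0 : czGate S ψ w0 = -ψ w0 := cz_pos S ψ w0 h0S
  -- the two rectangle identities
  have E1 : ψ w0 * ψ Y = ψ U * ψ V := by
    rw [hfg w0, hfg Y, hfg U, hfg V, restr_congr rYA, restr_congr rYB,
      restr_congr rUA, restr_congr rVB]
    ring
  have E2 : czGate S ψ w0 * czGate S ψ Y = czGate S ψ U * czGate S ψ V := by
    rw [hFG w0, hFG Y, hFG U, hFG V, restr_congr rUA', restr_congr rUB',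
      restr_congr rVA', restr_congr rVB']
    ring
  rw [s0, sY, sU, sV] at E2
  have key : ψ w0 * ψ Y = 0 := by linear_combination (E1 - E2) / 2
  exact mul_ne_zero h0 hY0 key

end EntAux

theorem entanglement_lemma (r : ℕ) (hr : 1 ≤ r) (S : Finset (Fin r)) (hS : 2 ≤ S.card)
    (ψ : QState r) (hψ : UnitVec ψ) :
    SEntangled S ψ ∨ SEntangled S (czGate S ψ) ∨ SimplifiesOn S ψ := by
  by_cases h1 : SSeparable S ψ
  case neg => exact Or.inl h1
  by_cases h2 : SSeparable S (czGate S ψ)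
  case neg => exact Or.inr (Or.inl h2)
  right; right
  by_contra h3
  unfold SimplifiesOn at h3
  push_neg at h3
  obtain ⟨hne, hT⟩ := h3
  have hTne : ∀ T, T ⊂ S → czGate S ψ ≠ czGate T ψ := fun T hTs hEq => hne (hT T hTs hEq)
  obtain ⟨A, B, ⟨hAne, hBne, hABd, hABu⟩, hAS, hBS, hsep⟩ := h1
  obtain ⟨A', B', ⟨hA'ne, hB'ne, hA'B'd, hA'B'u⟩, hA'S, hB'S, hsep'⟩ := h2
  obtain ⟨w0, h0, h0S⟩ := witness_top hne
  -- extracting a support point with a zero in `S ∩ C`, when `S ∩ C` is nonempty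
  have getw : ∀ C : Finset (Fin r), (S ∩ C).Nonempty →
      ∃ x, ψ x ≠ 0 ∧ ∃ i, i ∈ S ∧ i ∈ C ∧ x i = false := by
    intro C hC
    obtain ⟨s, hs⟩ := hC
    have hsS : s ∈ S := (Finset.mem_inter.mp hs).1
    have hsC : s ∈ C := (Finset.mem_inter.mp hs).2
    have hsub : S \ C ⊂ S := by
      rw [Finset.ssubset_iff_of_subset Finset.sdiff_subset]
      exact ⟨s, hsS, by simp [Finset.mem_sdiff, hsS, hsC]⟩
    obtain ⟨x, hx0, hxT, i, hiS, hif⟩ := witness_sub Finset.sdiff_subset (hTne _ hsub)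
    refine ⟨x, hx0, i, hiS, ?_, hif⟩
    by_contra hiC
    have : x i = true := hxT i (Finset.mem_sdiff.mpr ⟨hiS, hiC⟩)
    rw [this] at hif; exact Bool.true_eq_false_eq_False hif
  have Q14 : (S ∩ (A ∩ A')).Nonempty → (S ∩ (B ∩ B')).Nonempty → False := by
    intro hq1 hq4
    obtain ⟨wa, ha, ia, hiaS, hiaC, hiaf⟩ := getw _ hq1
    obtain ⟨wb, hb, ib, hibS, hibC, hibf⟩ := getw _ hq4
    exact cz_core S ψ A B A' B' hABd hABu hA'B'd hsep hsep' w0 wa wb h0 h0S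
      ha ⟨ia, hiaS, Finset.mem_inter.mp hiaC, hiaf⟩
      hb ⟨ib, hibS, Finset.mem_inter.mp hibC, hibf⟩
  have Q23 : (S ∩ (A ∩ B')).Nonempty → (S ∩ (B ∩ A')).Nonempty → False := by
    intro hq2 hq3
    obtain ⟨wa, ha, ia, hiaS, hiaC, hiaf⟩ := getw _ hq2
    obtain ⟨wb, hb, ib, hibS, hibC, hibf⟩ := getw _ hq3
    exact cz_core S ψ A B B' A' hABd hABu hA'B'd.symm hsep (sep_swap hsep') w0 wa wb h0 h0S
      ha ⟨ia, hiaS, Finset.mem_inter.mp hiaC, hiaf⟩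
      hb ⟨ib, hibS, Finset.mem_inter.mp hibC, hibf⟩
  have memAB : ∀ i : Fin r, i ∈ A ∨ i ∈ B := fun i =>
    Finset.mem_union.mp (by rw [hABu]; exact Finset.mem_univ i)
  have memA'B' : ∀ i : Fin r, i ∈ A' ∨ i ∈ B' := fun i =>
    Finset.mem_union.mp (by rw [hA'B'u]; exact Finset.mem_univ i)
  have mk : ∀ (s : Fin r) (X Y : Finset (Fin r)), s ∈ S → s ∈ X → s ∈ Y →
      (S ∩ (X ∩ Y)).Nonempty := fun s X Y h1 h2 h3 =>
    ⟨s, Finset.mem_inter.mpr ⟨h1, Finset.mem_inter.mpr ⟨h2, h3⟩⟩⟩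
  obtain ⟨sA, hsA⟩ := hAS
  obtain ⟨sB, hsB⟩ := hBS
  obtain ⟨sA', hsA'⟩ := hA'S
  obtain ⟨sB', hsB'⟩ := hB'S
  have hsA1 : sA ∈ A := (Finset.mem_inter.mp hsA).1
  have hsA2 : sA ∈ S := (Finset.mem_inter.mp hsA).2
  have hsB1 : sB ∈ B := (Finset.mem_inter.mp hsB).1
  have hsB2 : sB ∈ S := (Finset.mem_inter.mp hsB).2
  have hsA'1 : sA' ∈ A' := (Finset.mem_inter.mp hsA').1
  have hsA'2 : sA' ∈ S := (Finset.mem_inter.mp hsA').2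
  have hsB'1 : sB' ∈ B' := (Finset.mem_inter.mp hsB').1
  have hsB'2 : sB' ∈ S := (Finset.mem_inter.mp hsB').2
  rcases memAB sB' with h | h
  · -- sB' ∈ A, so S ∩ A ∩ B' nonempty (q2)
    have hq2 := mk sB' A B' hsB'2 h hsB'1
    rcases memA'B' sB with h' | h'
    · exact Q23 hq2 (mk sB B A' hsB2 hsB1 h')
    · have hq4 := mk sB B B' hsB2 hsB1 h'
      rcases memAB sA' with h'' | h''
      · exact Q14 (mk sA' A A' hsA'2 h'' hsA'1) hq4
      · exact Q23 hq2 (mk sA' B A' hsA'2 h'' hsA'1)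
  · -- sB' ∈ B, so q4
    have hq4 := mk sB' B B' hsB'2 h hsB'1
    rcases memA'B' sA with h' | h'
    · exact Q14 (mk sA A A' hsA2 hsA1 h') hq4
    · have hq2 := mk sA A B' hsA2 hsA1 h'
      rcases memAB sA' with h'' | h''
      · exact Q14 (mk sA' A A' hsA'2 h'' hsA'1) hq4
      · exact Q23 hq2 (mk sA' B A' hsA'2 h'' hsA'1)
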